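/- Let y be a finite word over an alphabet Σ and let x be a word of length m ≥ 2 with x₁ = x[1..m-1] and x₂ = x[1..m-2] (the suffix of x obtained by removing its first letter, and that suffix with its last letter further removed). Define B(w) = { y[j-1] : j ≥ 1 and w occurs in y at starting position j } for any word w. Then x is a minimal absent word of y if and only if x₁ occurs in y, x₂ occurs in y, and the letter x[0] belongs to B(x₂) but not to B(x₁). -/

import Mathlib

/-- `x` is a factor (contiguous subword) of `y` iff `x <:+: y` (`List.IsInfix`).
A minimal absent word of `y`: a word of length at least 2 that is not a factor
of `y` but all of whose proper factors are factors of `y`. -/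
def MinimalAbsentWord {α : Type*} (y x : List α) : Prop :=
  2 ≤ x.length ∧ ¬ x <:+: y ∧ ∀ f : List α, f <:+: x → f ≠ x → f <:+: y

/-- Membership of a letter `a` in `B(w)` (letters immediately preceding an
occurrence of `w` in `y`) is equivalent to `a :: w` being a factor of `y`. -/
theorem stmt_0 {α : Type*} (y : List α) (a : α) (s : List α) (hs : s ≠ []) :
    MinimalAbsentWord y (a :: s) ↔
      s <:+: y ∧ s.dropLast <:+: y ∧
        (a :: s.dropLast) <:+: y ∧ ¬ (a :: s) <:+: y := by
  have hdl : (a :: s).dropLast = a :: s.dropLast := by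
    cases s with
    | nil => exact absurd rfl hs
    | cons b t => rfl
  constructor
  · rintro ⟨hlen, habs, hmin⟩
    refine ⟨?_, ?_, ?_, habs⟩
    · exact hmin s (List.suffix_cons a s).isInfix (by intro h; simpa using congrArg List.length h)
    · refine hmin s.dropLast (List.IsInfix.trans ?_ (List.suffix_cons a s).isInfix)
        (by intro h; have := congrArg List.length h
            simp [List.length_dropLast] at this)
      exact (List.dropLast_prefix s).isInfix
    · refine hmin (a :: s.dropLast) ?_ ?_
      · rw [← hdl]; exact (List.dropLast_prefix (a :: s)).isInfix
      · intro h
        have := congrArg List.length h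
        simp [List.length_dropLast] at this
        have : s.length ≠ 0 := by simpa using (List.length_pos_iff.mpr hs).ne'
        omega
  · rintro ⟨h1, h2, h3, habs⟩
    refine ⟨by have := List.length_pos_iff.mpr hs; simp; omega, habs, ?_⟩
    rintro f ⟨t, u, htu⟩ hne
    cases t with
    | cons b t' =>
      have : t' ++ f ++ u = s := by simpa using congrArg List.tail htu
      exact List.IsInfix.trans ⟨t', u, this⟩ h1
    | nil =>
      simp only [List.nil_append] at htu
      cases u with
      | nil => exact absurd (by simpa using htu) hne
      | cons c u' =>
        have hpre : f <+: (a :: s).dropLast := by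
          rw [← htu, List.dropLast_append_of_ne_nil (by simp)]
          exact ⟨(c :: u').dropLast, rfl⟩
        rw [hdl] at hpre
        exact List.IsInfix.trans hpre.isInfix h3
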